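/- arXiv:2407.15361 — 3 statements merged into one kernel-verified Lean document; each statement's English description precedes it below -/
import Mathlib

section
/- Let a, b : ℝ → ℝ be continuous T-periodic functions with T > 0 and b(t) > 0 for all t. If ∫₀ᵀ a(t) dt > 0, then the ODE u'(t) = a(t) u(t) − b(t) u(t)² has a unique positive T-periodic solution, given explicitly by u(t) = e^{A(t)} / ( C₀ + ∫₀ᵗ b(s) e^{A(s)} ds ) where A(t) = ∫₀ᵗ a(s) ds and C₀ = ( ∫₀ᵀ b(s) e^{A(s)} ds ) / ( e^{A(T)} − 1 ). -/
open intervalIntegral MeasureTheory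

private lemma stmt7_alg1 (E Dv Ft x y : ℝ) (hDv : Dv ≠ 0) (hFt : Ft = y * E) :
    x * (E / Dv) - y * (E / Dv) ^ 2 = (E * x * Dv - E * Ft) / Dv ^ 2 := by
  subst hFt; field_simp

private lemma stmt7_alg2 (E Vv Ft x y : ℝ) (hV : Vv ≠ 0) (hFt : Ft = y * E) :
    (0:ℝ) = (E * x * Vv - E * (x * Vv - y * Vv ^ 2)) / Vv ^ 2 - Ft := by
  subst hFt; field_simp; ring

/-- If the mean of `a` over a period is positive, the periodic logistic ODE
`u' = a u − b u²` has a unique positive `T`-periodic solution, given explicitly by the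
Bernoulli-substitution formula. -/
theorem stmt7 (a b : ℝ → ℝ) (T : ℝ) (hT : 0 < T)
    (ha : Continuous a) (hb : Continuous b)
    (haP : Function.Periodic a T) (hbP : Function.Periodic b T)
    (hbpos : ∀ t, 0 < b t)
    (hmean : 0 < ∫ t in (0:ℝ)..T, a t)
    (A : ℝ → ℝ) (hA : ∀ t, A t = ∫ s in (0:ℝ)..t, a s)
    (C0 : ℝ)
    (hC0 : C0 = (∫ s in (0:ℝ)..T, b s * Real.exp (A s)) / (Real.exp (A T) - 1))
    (u : ℝ → ℝ)
    (hu : ∀ t, u t = Real.exp (A t) / (C0 + ∫ s in (0:ℝ)..t, b s * Real.exp (A s))) :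
    (∀ t, 0 < u t) ∧ Function.Periodic u T ∧
    (∀ t, HasDerivAt u (a t * u t - b t * (u t) ^ 2) t) ∧
    (∀ v : ℝ → ℝ, (∀ t, HasDerivAt v (a t * v t - b t * (v t) ^ 2) t) →
      (∀ t, 0 < v t) → Function.Periodic v T → v = u) := by
  have hIa : ∀ s t : ℝ, IntervalIntegrable a volume s t := fun s t => ha.intervalIntegrable s t
  -- A is continuous, A 0 = 0, A' = a
  have hAc : Continuous A :=
    (intervalIntegral.continuous_primitive hIa 0).congr (fun t => (hA t).symm)
  have hA0 : A 0 = 0 := by rw [hA]; simp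
  have hAderiv : ∀ t, HasDerivAt A (a t) t := by
    intro t
    have h := intervalIntegral.integral_hasDerivAt_right (hIa 0 t)
      (ha.stronglyMeasurableAtFilter volume (nhds t)) ha.continuousAt
    exact h.congr_of_eventuallyEq (Filter.Eventually.of_forall fun x => hA x)
  -- additivity of A
  have hAadd : ∀ t, A (t + T) = A t + A T := by
    intro t
    have h1 : (∫ x in (0:ℝ)..t, a (x + T)) = ∫ x in T..(t + T), a x := by
      simpa using intervalIntegral.integral_comp_add_right (a := (0:ℝ)) (b := t) a T
    simp only [haP _] at h1
    rw [hA (t + T), hA t, hA T, ← intervalIntegral.integral_add_adjacent_intervals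
      (hIa 0 T) (hIa T (t + T)), ← h1]
    ring
  have hAT : 0 < A T := by rw [hA]; exact hmean
  have heAT : 1 < Real.exp (A T) := by
    rw [← Real.exp_zero]; exact Real.exp_lt_exp.mpr hAT
  have heAT0 : (0:ℝ) < Real.exp (A T) := Real.exp_pos _
  -- the function F = b * exp A and its primitive B
  set F : ℝ → ℝ := fun s => b s * Real.exp (A s) with hF
  have hFc : Continuous F := hb.mul (Real.continuous_exp.comp hAc)
  have hFpos : ∀ s, 0 < F s := fun s => mul_pos (hbpos s) (Real.exp_pos _)
  have hIF : ∀ s t : ℝ, IntervalIntegrable F volume s t := fun s t => hFc.intervalIntegrable s t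
  set B : ℝ → ℝ := fun t => ∫ s in (0:ℝ)..t, F s with hBdef
  have hB0 : B 0 = 0 := by simp [hBdef]
  have hBderiv : ∀ t, HasDerivAt B (F t) t := fun t =>
    intervalIntegral.integral_hasDerivAt_right (hIF 0 t)
      (hFc.stronglyMeasurableAtFilter volume (nhds t)) hFc.continuousAt
  have hBnonneg : ∀ t, 0 ≤ t → 0 ≤ B t := by
    intro t ht
    exact intervalIntegral.integral_nonneg ht (fun s _ => (hFpos s).le)
  have hFT : ∀ x, F (x + T) = Real.exp (A T) * F x := by
    intro x
    simp only [hF, hbP x, hAadd x, Real.exp_add]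
    ring
  have hBadd : ∀ t, B (t + T) = B T + Real.exp (A T) * B t := by
    intro t
    have h1 : (∫ x in (0:ℝ)..t, F (x + T)) = ∫ x in T..(t + T), F x := by
      simpa using intervalIntegral.integral_comp_add_right (a := (0:ℝ)) (b := t) F T
    simp only [hFT] at h1
    rw [intervalIntegral.integral_const_mul] at h1
    simp only [hBdef]
    rw [← intervalIntegral.integral_add_adjacent_intervals (hIF 0 T) (hIF T (t + T)), ← h1]
  -- C0
  have hBTpos : 0 < B T :=
    intervalIntegral.intervalIntegral_pos_of_pos (hIF 0 T) hFpos hT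
  have hC0pos : 0 < C0 := by
    rw [hC0]; exact div_pos hBTpos (by linarith)
  have hne1 : Real.exp (A T) - 1 ≠ 0 := by linarith
  have hBT : B T = C0 * (Real.exp (A T) - 1) := by
    rw [hC0, div_mul_cancel₀ _ hne1]
  -- the denominator D
  set D : ℝ → ℝ := fun t => C0 + B t with hDdef
  have hDadd : ∀ t, D (t + T) = Real.exp (A T) * D t := by
    intro t
    simp only [hDdef, hBadd t, hBT]
    ring
  have hDpos : ∀ t, 0 < D t := by
    have key : ∀ n : ℕ, ∀ t : ℝ, -(n * T) ≤ t → 0 < D t := by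
      intro n
      induction n with
      | zero =>
        intro t ht
        simp only [Nat.cast_zero, zero_mul, neg_zero] at ht
        have := hBnonneg t ht
        simp only [hDdef]; linarith
      | succ n ih =>
        intro t ht
        have h2 : 0 < D (t + T) := by
          apply ih
          push_cast at ht ⊢
          linarith
        have h3 := hDadd t
        nlinarith [Real.exp_pos (A T)]
    intro t
    obtain ⟨n, hn⟩ := exists_nat_ge (-t / T)
    apply key n t
    have : -t ≤ n * T := by
      rw [div_le_iff₀ hT] at hn
      linarith
    linarith
  have hDderiv : ∀ t, HasDerivAt D (F t) t := fun t => (hBderiv t).const_add C0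
  have hDne : ∀ t, D t ≠ 0 := fun t => (hDpos t).ne'
  have hu' : ∀ t, u t = Real.exp (A t) / D t := fun t => hu t
  -- positivity
  have hupos : ∀ t, 0 < u t := by
    intro t
    rw [hu' t]
    exact div_pos (Real.exp_pos _) (hDpos t)
  -- periodicity
  have huP : Function.Periodic u T := by
    intro t
    rw [hu' (t + T), hu' t, hAadd t, hDadd t, Real.exp_add]
    rw [mul_comm (Real.exp (A t)), mul_div_mul_left _ _ (ne_of_gt heAT0)]
  -- derivative
  have huderiv : ∀ t, HasDerivAt u (a t * u t - b t * (u t) ^ 2) t := by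
    intro t
    have h1 : HasDerivAt (fun t => Real.exp (A t)) (Real.exp (A t) * a t) t := (hAderiv t).exp
    have hdiv : HasDerivAt (fun t => Real.exp (A t) / D t)
        ((Real.exp (A t) * a t * D t - Real.exp (A t) * F t) / (D t) ^ 2) t :=
      h1.div (hDderiv t) (hDne t)
    have heq : HasDerivAt u
        ((Real.exp (A t) * a t * D t - Real.exp (A t) * F t) / (D t) ^ 2) t :=
      hdiv.congr_of_eventuallyEq (Filter.Eventually.of_forall fun x => hu' x)
    convert heq using 1
    rw [hu' t]
    exact stmt7_alg1 (Real.exp (A t)) (D t) (F t) (a t) (b t) (hDne t) rfl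
  refine ⟨hupos, huP, huderiv, ?_⟩
  -- uniqueness
  intro v hv hvpos hvP
  have hvne : ∀ t, v t ≠ 0 := fun t => (hvpos t).ne'
  set w : ℝ → ℝ := fun t => Real.exp (A t) / v t - B t with hwdef
  have hw' : ∀ t, HasDerivAt w 0 t := by
    intro t
    have h1 : HasDerivAt (fun t => Real.exp (A t)) (Real.exp (A t) * a t) t := (hAderiv t).exp
    have hdiv : HasDerivAt (fun t => Real.exp (A t) / v t)
        ((Real.exp (A t) * a t * v t - Real.exp (A t) * (a t * v t - b t * (v t) ^ 2)) /
          (v t) ^ 2) t :=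
      h1.div (hv t) (hvne t)
    have := hdiv.sub (hBderiv t)
    exact this.congr_deriv (stmt7_alg2 (Real.exp (A t)) (v t) (F t) (a t) (b t) (hvne t) rfl).symm
  have hwconst : ∀ t, w t = w 0 := fun t =>
    is_const_of_deriv_eq_zero (fun x => (hw' x).differentiableAt) (fun x => (hw' x).deriv) t 0
  have hw0 : w 0 = 1 / v 0 := by simp [hwdef, hA0, hB0]
  have hvT : v T = v 0 := by have := hvP 0; rwa [zero_add] at this
  have hinv : 1 / v 0 = C0 := by
    have h1 := hwconst T
    rw [hw0, hwdef] at h1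
    replace h1 : Real.exp (A T) / v T - B T = 1 / v 0 := h1
    rw [hvT] at h1
    -- exp (A T) / v 0 - B T = 1 / v 0
    have h2 : (Real.exp (A T) - 1) / v 0 = B T := by
      rw [sub_div]
      linarith
    rw [hC0]
    have hBTeq : (∫ s in (0:ℝ)..T, b s * Real.exp (A s)) = B T := rfl
    rw [hBTeq, ← h2, div_right_comm, div_self hne1]
  funext t
  have h1 := hwconst t
  rw [hw0, hinv, hwdef] at h1
  replace h1 : Real.exp (A t) / v t - B t = C0 := h1
  have h2 : Real.exp (A t) / v t = D t := by simp only [hDdef]; linarith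
  have h3 : Real.exp (A t) = D t * v t := (div_eq_iff (hvne t)).mp h2
  rw [hu' t, h3, mul_comm, mul_div_assoc, div_self (hDne t), mul_one]
end

section
/- Let a, b : ℝ → ℝ be continuous T-periodic functions with b > 0 and ∫₀ᵀ a(t) dt > 0, and let V be the unique positive T-periodic solution of u' = a u − b u². Then for every solution u of u' = a u − b u² with u(0) > 0, one has u(nT + t) → V(t) as n → ∞, uniformly for t ∈ [0, T]. -/
open Set Filter Topology

/-- Constancy on `[0, ∞)` from vanishing right derivatives. -/
lemma stmt8_const_on_Ici {g : ℝ → ℝ} (hc : ∀ x : ℝ, 0 ≤ x → ContinuousAt g x)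
    (hd : ∀ x : ℝ, 0 ≤ x → HasDerivWithinAt g 0 (Set.Ici x) x) :
    ∀ x : ℝ, 0 ≤ x → g x = g 0 := by
  intro x hx
  exact constant_of_has_deriv_right_zero
    (fun y hy => (hc y hy.1).continuousWithinAt)
    (fun y hy => hd y hy.1) x ⟨hx, le_rfl⟩

/-- Global asymptotic stability (in the periodic sense) of the positive periodic solution of
the periodic logistic ODE: every solution with positive initial value converges to it. -/
theorem stmt8 (a b : ℝ → ℝ) (T : ℝ) (hT : 0 < T)
    (ha : Continuous a) (hb : Continuous b)
    (haP : Function.Periodic a T) (hbP : Function.Periodic b T)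
    (hbpos : ∀ t, 0 < b t)
    (hmean : 0 < ∫ t in (0:ℝ)..T, a t)
    (V : ℝ → ℝ)
    (hV : ∀ t, HasDerivAt V (a t * V t - b t * (V t) ^ 2) t)
    (hVpos : ∀ t, 0 < V t) (hVP : Function.Periodic V T)
    (u : ℝ → ℝ)
    (hu : ∀ t, 0 ≤ t → HasDerivAt u (a t * u t - b t * (u t) ^ 2) t)
    (hu0 : 0 < u 0) :
    TendstoUniformlyOn (fun (n : ℕ) (t : ℝ) => u (n * T + t)) V
      Filter.atTop (Set.Icc 0 T) := by
  -- `ut` : continuous extension of `u` to the left by the constant `u 0`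
  set ut : ℝ → ℝ := fun s => u (max s 0) with hut_def
  have hut_eq : ∀ s : ℝ, 0 ≤ s → ut s = u s := fun s hs => by
    simp [hut_def, max_eq_left hs]
  have hucont : ∀ s : ℝ, 0 ≤ s → ContinuousAt u s := fun s hs => (hu s hs).continuousAt
  have hutcont : Continuous ut := by
    rw [continuous_iff_continuousAt]
    intro s
    have h1 : Filter.Tendsto (fun x : ℝ => max x 0) (nhds s) (nhds (max s 0)) :=
      (continuous_id.max continuous_const).tendsto s
    exact Filter.Tendsto.comp (hucont _ (le_max_right s 0)) h1
  have hut_deriv : ∀ x : ℝ, 0 ≤ x →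
      HasDerivWithinAt ut (a x * ut x - b x * (ut x) ^ 2) (Set.Ici x) x := by
    intro x hx
    rw [hut_eq x hx]
    exact (hu x hx).hasDerivWithinAt.congr
      (fun y hy => hut_eq y (hx.trans hy)) (hut_eq x hx)
  -- Positivity of `u` on `[0,∞)` via an integrating factor
  set f0 : ℝ → ℝ := fun s => a s - b s * ut s with hf0_def
  have hf0c : Continuous f0 := ha.sub (hb.mul hutcont)
  set A : ℝ → ℝ := fun x => ∫ s in (0:ℝ)..x, f0 s with hA_def
  have hA : ∀ x : ℝ, HasDerivAt A (f0 x) x := fun x =>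
    (hf0c.integral_hasStrictDerivAt 0 x).hasDerivAt
  have hAc : Continuous A := continuous_iff_continuousAt.2 fun x => (hA x).continuousAt
  have hA0 : A 0 = 0 := intervalIntegral.integral_same
  set g : ℝ → ℝ := fun x => ut x * Real.exp (-A x) with hg_def
  have hgd : ∀ x : ℝ, 0 ≤ x → HasDerivWithinAt g 0 (Set.Ici x) x := by
    intro x hx
    have h1 : HasDerivAt (fun y => Real.exp (-A y)) (Real.exp (-A x) * (-f0 x)) x :=
      ((hA x).neg).exp
    have h2 : HasDerivWithinAt (fun y => ut y * Real.exp (-A y))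
        ((a x * ut x - b x * ut x ^ 2) * Real.exp (-A x) + ut x * (Real.exp (-A x) * -f0 x))
        (Set.Ici x) x := (hut_deriv x hx).mul h1.hasDerivWithinAt
    convert h2 using 1
    simp only [hf0_def]
    ring
  have hgc : Continuous g := hutcont.mul (Real.continuous_exp.comp hAc.neg)
  have hgconst := stmt8_const_on_Ici (fun x _ => hgc.continuousAt) hgd
  have hut_pos : ∀ s : ℝ, 0 < ut s := by
    intro s
    rcases le_or_gt 0 s with hs | hs
    · have h2 := hgconst s hs
      have hg0 : g 0 = u 0 := by
        simp [hg_def, hA0, hut_eq 0 le_rfl]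
      have h3 : ut s * Real.exp (-A s) = u 0 := by
        rw [← hg0]; exact h2
      nlinarith [Real.exp_pos (-A s)]
    · have : ut s = u 0 := by simp [hut_def, max_eq_right hs.le]
      rw [this]; exact hu0
  have hupos : ∀ s : ℝ, 0 ≤ s → 0 < u s := fun s hs => (hut_eq s hs) ▸ hut_pos s
  -- the reciprocal functions satisfy a linear ODE
  set W : ℝ → ℝ := fun t => (V t)⁻¹ with hW_def
  set w : ℝ → ℝ := fun s => (ut s)⁻¹ with hw_def
  set z : ℝ → ℝ := fun s => w s - W s with hz_def
  set α : ℝ → ℝ := fun x => ∫ s in (0:ℝ)..x, a s with hα_def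
  have hα : ∀ x : ℝ, HasDerivAt α (a x) x := fun x =>
    (ha.integral_hasStrictDerivAt 0 x).hasDerivAt
  have hαc : Continuous α := continuous_iff_continuousAt.2 fun x => (hα x).continuousAt
  have hα0 : α 0 = 0 := intervalIntegral.integral_same
  have hWd : ∀ t : ℝ, HasDerivAt W (-(a t) * W t + b t) t := by
    intro t
    have h1 : HasDerivAt (fun y => (V y)⁻¹) (-(a t * V t - b t * V t ^ 2) / V t ^ 2) t :=
      (hV t).inv (hVpos t).ne'
    convert h1 using 1
    simp only [hW_def]
    field_simp [(hVpos t).ne']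
    ring
  have hwd : ∀ x : ℝ, 0 ≤ x → HasDerivWithinAt w (-(a x) * w x + b x) (Set.Ici x) x := by
    intro x hx
    have h1 : HasDerivWithinAt (fun y => (ut y)⁻¹) (-(a x * ut x - b x * ut x ^ 2) / ut x ^ 2)
        (Set.Ici x) x := (hut_deriv x hx).inv (hut_pos x).ne'
    convert h1 using 1
    simp only [hw_def]
    field_simp [(hut_pos x).ne']
    ring
  set h : ℝ → ℝ := fun x => z x * Real.exp (α x) with hh_def
  have hhd : ∀ x : ℝ, 0 ≤ x → HasDerivWithinAt h 0 (Set.Ici x) x := by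
    intro x hx
    have h1 : HasDerivAt (fun y => Real.exp (α y)) (Real.exp (α x) * a x) x := (hα x).exp
    have h2 : HasDerivWithinAt (fun y => (w y - W y) * Real.exp (α y))
        ((-a x * w x + b x - (-a x * W x + b x)) * Real.exp (α x) + (w x - W x) * (Real.exp (α x) * a x))
        (Set.Ici x) x := ((hwd x hx).sub (hWd x).hasDerivWithinAt).mul h1.hasDerivWithinAt
    convert h2 using 1
    ring
  have hVc : Continuous V := continuous_iff_continuousAt.2 fun t => (hV t).continuousAt
  have hhc : Continuous h :=
    ((hutcont.inv₀ fun s => (hut_pos s).ne').sub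
      (hVc.inv₀ fun t => (hVpos t).ne')).mul (Real.continuous_exp.comp hαc)
  have hhconst := stmt8_const_on_Ici (fun x _ => hhc.continuousAt) hhd
  have hzformula : ∀ x : ℝ, 0 ≤ x → z x * Real.exp (α x) = z 0 := by
    intro x hx
    have h1 := hhconst x hx
    simpa [hh_def, hα0] using h1
  -- the integral of `a` over `[0, n T + t]`
  have haint : ∀ t₁ t₂ : ℝ, IntervalIntegrable a MeasureTheory.volume t₁ t₂ :=
    fun t₁ t₂ => ha.intervalIntegrable _ _
  set I : ℝ := ∫ s in (0:ℝ)..T, a s with hI_def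
  have hαadd : ∀ (n : ℕ) (t : ℝ), α ((n : ℝ) * T + t) = α t + (n : ℝ) * I := by
    intro n t
    have h1 : ((n : ℝ) * T + t) = t + (n : ℤ) • T := by
      rw [zsmul_eq_mul]; push_cast; ring
    have h2 := haP.intervalIntegral_add_zsmul_eq (n : ℤ) t haint
    have h3 := haP.intervalIntegral_add_eq t 0
    have h4 : α (t + (n : ℤ) • T) = α t + (n : ℤ) • (∫ x in t..(t + T), a x) := by
      simp only [hα_def]
      rw [← intervalIntegral.integral_add_adjacent_intervals (haint 0 t)
        (haint t (t + (n : ℤ) • T)), h2]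
    rw [h1, h4, h3]
    push_cast
    simp [hI_def]
  -- bounds on compact `[0, T]`
  obtain ⟨C₀, hC₀⟩ := isCompact_Icc.exists_bound_of_continuousOn
    ((Real.continuous_exp.comp hαc.neg).continuousOn (s := Icc (0:ℝ) T))
  set C : ℝ := max C₀ 1 with hC_def
  have hCpos : 0 < C := lt_of_lt_of_le one_pos (le_max_right _ _)
  have hC : ∀ t ∈ Icc (0:ℝ) T, Real.exp (-α t) ≤ C := by
    intro t ht
    calc Real.exp (-α t) ≤ ‖Real.exp (-α t)‖ := le_abs_self _
    _ ≤ C₀ := hC₀ t ht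
    _ ≤ C := le_max_left _ _
  obtain ⟨Vm₀, hVm₀⟩ := isCompact_Icc.exists_bound_of_continuousOn
    (hVc.continuousOn (s := Icc (0:ℝ) T))
  set Vm : ℝ := max Vm₀ 1 with hVm_def
  have hVmpos : 0 < Vm := lt_of_lt_of_le one_pos (le_max_right _ _)
  have hVm : ∀ t ∈ Icc (0:ℝ) T, V t ≤ Vm := by
    intro t ht
    calc V t ≤ ‖V t‖ := le_abs_self _
    _ ≤ Vm₀ := hVm₀ t ht
    _ ≤ Vm := le_max_left _ _
  set Wm : ℝ := Vm⁻¹ with hWm_def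
  have hWmpos : 0 < Wm := inv_pos.2 hVmpos
  have hWlb : ∀ t ∈ Icc (0:ℝ) T, Wm ≤ W t := by
    intro t ht
    exact inv_anti₀ (hVpos t) (hVm t ht)
  -- the decaying bound
  set K : ℝ := |z 0| * C with hK_def
  have hKnonneg : 0 ≤ K := mul_nonneg (abs_nonneg _) hCpos.le
  have decay : Tendsto (fun n : ℕ => K * Real.exp (-((n : ℝ) * I))) atTop (𝓝 0) := by
    have h1 : Tendsto (fun n : ℕ => (n : ℝ) * I) atTop atTop :=
      tendsto_natCast_atTop_atTop.atTop_mul_const hmean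
    have h2 : Tendsto (fun n : ℕ => -((n : ℝ) * I)) atTop atBot :=
      tendsto_neg_atTop_atBot.comp h1
    have h3 : Tendsto (fun n : ℕ => Real.exp (-((n : ℝ) * I))) atTop (𝓝 0) :=
      Real.tendsto_exp_atBot.comp h2
    simpa using h3.const_mul K
  rw [Metric.tendstoUniformlyOn_iff]
  intro ε hε
  set δ : ℝ := min (Wm / 2) (ε * Wm / (2 * Vm)) with hδ_def
  have hδpos : 0 < δ := lt_min (by positivity) (by positivity)
  filter_upwards [decay.eventually (gt_mem_nhds hδpos)] with n hn
  intro t ht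
  show dist (V t) (u ((n : ℝ) * T + t)) < ε
  set s : ℝ := (n : ℝ) * T + t with hs_def
  have hs0 : (0 : ℝ) ≤ s := add_nonneg (mul_nonneg n.cast_nonneg hT.le) ht.1
  set εn : ℝ := K * Real.exp (-((n : ℝ) * I)) with hεn_def
  have hεnnonneg : 0 ≤ εn := mul_nonneg hKnonneg (Real.exp_pos _).le
  -- the formula for `z s`
  have hzs : z s = z 0 * Real.exp (-α s) := by
    have h1 := hzformula s hs0
    rw [← h1, Real.exp_neg, mul_assoc, mul_inv_cancel₀ (Real.exp_pos _).ne', mul_one]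
  have habs : |z s| ≤ εn := by
    rw [hzs, abs_mul, abs_of_pos (Real.exp_pos _)]
    have h1 : α s = α t + (n : ℝ) * I := hαadd n t
    rw [h1, neg_add, Real.exp_add]
    calc |z 0| * (Real.exp (-α t) * Real.exp (-((n : ℝ) * I)))
        ≤ |z 0| * (C * Real.exp (-((n : ℝ) * I))) := by
          gcongr
          exact hC t ht
    _ = εn := by rw [hεn_def, hK_def]; ring
  have hεnδ : εn < δ := hn
  -- periodicity
  have hVst : V s = V t := by
    have h2 := (hVP.nat_mul n) t
    rw [hs_def, add_comm]
    simpa using h2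
  have hWs : W s = W t := by
    simp only [hW_def, hVst]
  have hwsW : w s = W t + z s := by
    simp only [hz_def] at *
    rw [← hWs]; ring
  have hws_lb : Wm / 2 ≤ w s := by
    have h1 : Wm ≤ W t := hWlb t ht
    have h2 : -(Wm / 2) ≤ z s := by
      have := neg_abs_le (z s)
      have h3 : |z s| < Wm / 2 := lt_of_le_of_lt habs (lt_of_lt_of_le hεnδ (min_le_left _ _))
      linarith
    rw [hwsW]; linarith
  have hwspos : 0 < w s := lt_of_lt_of_le (by positivity) hws_lb
  have hus : u s = (w s)⁻¹ := by
    rw [hw_def]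
    simp only
    rw [hut_eq s hs0, inv_inv]
  have huspos : 0 < u s := hus ▸ inv_pos.2 hwspos
  have hus_ub : u s ≤ (Wm / 2)⁻¹ := by
    rw [hus]
    exact inv_anti₀ (by positivity) hws_lb
  -- the key identity
  have hid : V t - u s = z s * (V t * u s) := by
    have h1 : z s = (u s)⁻¹ - (V t)⁻¹ := by
      simp only [hz_def, hW_def, hus, inv_inv, hVst]
    rw [h1]
    have h2 : (u s)⁻¹ * u s = 1 := inv_mul_cancel₀ huspos.ne'
    have h3 : (V t)⁻¹ * V t = 1 := inv_mul_cancel₀ (hVpos t).ne'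
    linear_combination (-(V t)) * h2 + (u s) * h3
  rw [Real.dist_eq, hid, abs_mul, abs_of_pos (mul_pos (hVpos t) huspos)]
  have hfin : εn * (Vm * (Wm / 2)⁻¹) < ε := by
    have h1 : εn < ε * Wm / (2 * Vm) := lt_of_lt_of_le hεnδ (min_le_right _ _)
    have h2 : ε * Wm / (2 * Vm) * (Vm * (Wm / 2)⁻¹) = ε := by
      field_simp
    calc εn * (Vm * (Wm / 2)⁻¹) < ε * Wm / (2 * Vm) * (Vm * (Wm / 2)⁻¹) := by
          apply mul_lt_mul_of_pos_right h1 (by positivity)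
    _ = ε := h2
  have hstep : |z s| * (V t * u s) ≤ εn * (Vm * (Wm / 2)⁻¹) :=
    mul_le_mul habs (mul_le_mul (hVm t ht) hus_ub huspos.le hVmpos.le)
      (mul_pos (hVpos t) huspos).le hεnnonneg
  exact lt_of_le_of_lt hstep hfin
end

section
/- Let f, g : [0,1] → ℝ be continuous functions, differentiable at 0 and 1, with f(0) = f(1) = g(0) = g(1) = 0, f(x) > 0 for x ∈ (0,1), f'(0) > 0, f'(1) < 0, and g ≥ 0. Then there exists τ₀ > 0 such that for all τ ∈ (0, τ₀): f(x) > 2τ·g(x) for all x ∈ (0,1). -/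
/-- A function positive in `(0,1)`, vanishing at the endpoints with nondegenerate one-sided
derivatives, dominates `2τ g` for all small `τ > 0`, where `g ≥ 0` vanishes at the
endpoints and is differentiable there. -/
theorem stmt10 (f g : ℝ → ℝ)
    (hf : ContinuousOn f (Set.Icc 0 1)) (hg : ContinuousOn g (Set.Icc 0 1))
    (f'0 f'1 g'0 g'1 : ℝ)
    (hdf0 : HasDerivAt f f'0 0) (hdf1 : HasDerivAt f f'1 1)
    (hdg0 : HasDerivAt g g'0 0) (hdg1 : HasDerivAt g g'1 1)
    (hf0 : f 0 = 0) (hf1 : f 1 = 0) (hg0 : g 0 = 0) (hg1 : g 1 = 0)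
    (hfpos : ∀ x ∈ Set.Ioo (0:ℝ) 1, 0 < f x)
    (hf'0 : 0 < f'0) (hf'1 : f'1 < 0)
    (hgnn : ∀ x ∈ Set.Icc (0:ℝ) 1, 0 ≤ g x) :
    ∃ τ₀ : ℝ, 0 < τ₀ ∧ ∀ τ ∈ Set.Ioo (0:ℝ) τ₀, ∀ x ∈ Set.Ioo (0:ℝ) 1,
      2 * τ * g x < f x := by
  have hsub : Set.Ioo (0:ℝ) 1 ⊆ ({(0:ℝ)}ᶜ : Set ℝ) := fun x hx => ne_of_gt hx.1
  have hsub1 : Set.Ioo (0:ℝ) 1 ⊆ ({(1:ℝ)}ᶜ : Set ℝ) := fun x hx => ne_of_lt hx.2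
  -- key claim : linear domination
  obtain ⟨C, hC0, hC⟩ : ∃ C : ℝ, 0 ≤ C ∧ ∀ x ∈ Set.Ioo (0:ℝ) 1, g x ≤ C * f x := by
    set K0 : ℝ := (|g'0| + 1) * (2 / f'0) with hK0
    set K1 : ℝ := (|g'1| + 1) * (2 / (-f'1)) with hK1
    -- near 0
    have h0 : ∃ δ > (0:ℝ), ∀ x ∈ Set.Ioo (0:ℝ) 1, dist x 0 < δ → g x ≤ K0 * f x := by
      have hF : Filter.Tendsto (slope f 0) (nhdsWithin 0 (Set.Ioo 0 1)) (nhds f'0) :=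
        (hasDerivAt_iff_tendsto_slope.mp hdf0).mono_left (nhdsWithin_mono _ hsub)
      have hG : Filter.Tendsto (slope g 0) (nhdsWithin 0 (Set.Ioo 0 1)) (nhds g'0) :=
        (hasDerivAt_iff_tendsto_slope.mp hdg0).mono_left (nhdsWithin_mono _ hsub)
      have hF' : ∀ᶠ x in nhdsWithin 0 (Set.Ioo 0 1), f'0 / 2 < slope f 0 x :=
        hF.eventually_const_lt (by linarith)
      have hG' : ∀ᶠ x in nhdsWithin 0 (Set.Ioo 0 1), slope g 0 x < |g'0| + 1 :=
        hG.eventually_lt_const (by have := le_abs_self g'0; linarith)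
      have hE := hF'.and hG'
      rw [eventually_nhdsWithin_iff, Metric.eventually_nhds_iff] at hE
      obtain ⟨δ, hδ, hball⟩ := hE
      refine ⟨δ, hδ, fun x hx hdx => ?_⟩
      obtain ⟨hsf, hsg⟩ := hball hdx hx
      have hx0 : (0:ℝ) < x := hx.1
      have hsf' : f'0 / 2 < f x / x := by
        rwa [slope_def_field, hf0, sub_zero, sub_zero] at hsf
      have hsg' : g x / x < |g'0| + 1 := by
        rwa [slope_def_field, hg0, sub_zero, sub_zero] at hsg
      have h1 : f'0 / 2 * x < f x := (lt_div_iff₀ hx0).mp hsf'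
      have h2 : g x < (|g'0| + 1) * x := (div_lt_iff₀ hx0).mp hsg'
      have hpos : (0:ℝ) < (|g'0| + 1) * (2 / f'0) := by positivity
      have hmul := mul_lt_mul_of_pos_left h1 hpos
      have heq : (|g'0| + 1) * (2 / f'0) * (f'0 / 2 * x) = (|g'0| + 1) * x := by
        field_simp
      rw [hK0]
      rw [heq] at hmul
      linarith
    -- near 1
    have h1 : ∃ δ > (0:ℝ), ∀ x ∈ Set.Ioo (0:ℝ) 1, dist x 1 < δ → g x ≤ K1 * f x := by
      have hF : Filter.Tendsto (slope f 1) (nhdsWithin 1 (Set.Ioo 0 1)) (nhds f'1) :=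
        (hasDerivAt_iff_tendsto_slope.mp hdf1).mono_left (nhdsWithin_mono _ hsub1)
      have hG : Filter.Tendsto (slope g 1) (nhdsWithin 1 (Set.Ioo 0 1)) (nhds g'1) :=
        (hasDerivAt_iff_tendsto_slope.mp hdg1).mono_left (nhdsWithin_mono _ hsub1)
      have hF' : ∀ᶠ x in nhdsWithin 1 (Set.Ioo 0 1), slope f 1 x < f'1 / 2 :=
        hF.eventually_lt_const (by linarith)
      have hG' : ∀ᶠ x in nhdsWithin 1 (Set.Ioo 0 1), -(|g'1| + 1) < slope g 1 x :=
        hG.eventually_const_lt (by have := neg_abs_le g'1; linarith)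
      have hE := hF'.and hG'
      rw [eventually_nhdsWithin_iff, Metric.eventually_nhds_iff] at hE
      obtain ⟨δ, hδ, hball⟩ := hE
      refine ⟨δ, hδ, fun x hx hdx => ?_⟩
      obtain ⟨hsf, hsg⟩ := hball hdx hx
      have hx1 : (0:ℝ) < 1 - x := by linarith [hx.2]
      have e1 : (x:ℝ) - 1 = -(1 - x) := by ring
      have hsf' : f x / (x - 1) < f'1 / 2 := by
        rwa [slope_def_field, hf1, sub_zero] at hsf
      have hsg' : -(|g'1| + 1) < g x / (x - 1) := by
        rwa [slope_def_field, hg1, sub_zero] at hsg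
      rw [e1, div_neg] at hsf' hsg'
      have hsf'' : -(f'1 / 2) < f x / (1 - x) := by linarith
      have hsg'' : g x / (1 - x) < |g'1| + 1 := by linarith
      have h1 : -(f'1 / 2) * (1 - x) < f x := (lt_div_iff₀ hx1).mp hsf''
      have h2 : g x < (|g'1| + 1) * (1 - x) := (div_lt_iff₀ hx1).mp hsg''
      have hf1' : (0:ℝ) < -f'1 := by linarith
      have hpos : (0:ℝ) < (|g'1| + 1) * (2 / (-f'1)) := by positivity
      have hmul := mul_lt_mul_of_pos_left h1 hpos
      have heq : (|g'1| + 1) * (2 / (-f'1)) * (-(f'1 / 2) * (1 - x))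
          = (|g'1| + 1) * (1 - x) := by
        field_simp [hf'1.ne]
      rw [hK1]
      rw [heq] at hmul
      linarith
    obtain ⟨δ0, hδ0, H0⟩ := h0
    obtain ⟨δ1, hδ1, H1⟩ := h1
    clear_value K0 K1
    have hm01 : (0:ℝ) < min δ0 1 := lt_min hδ0 one_pos
    have hm11 : (0:ℝ) < min δ1 1 := lt_min hδ1 one_pos
    have hm01' : min δ0 1 ≤ 1 := min_le_right _ _
    have hm11' : min δ1 1 ≤ 1 := min_le_right _ _
    set a : ℝ := min δ0 1 / 2 with ha_def
    set b : ℝ := 1 - min δ1 1 / 2 with hb_def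
    clear_value a b
    have ha : 0 < a := by rw [ha_def]; linarith
    have ha' : a ≤ 1/2 := by rw [ha_def]; linarith
    have hb : b < 1 := by rw [hb_def]; linarith
    have hb' : 1/2 ≤ b := by rw [hb_def]; linarith
    have hab : a ≤ b := le_trans ha' hb'
    have hIsub : Set.Icc a b ⊆ Set.Ioo (0:ℝ) 1 := fun x hx =>
      ⟨lt_of_lt_of_le ha hx.1, lt_of_le_of_lt hx.2 hb⟩
    have hIsub' : Set.Icc a b ⊆ Set.Icc (0:ℝ) 1 := hIsub.trans Set.Ioo_subset_Icc_self
    have hne : (Set.Icc a b).Nonempty := ⟨a, le_refl _, hab⟩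
    obtain ⟨x₀, hx₀, hmin⟩ := isCompact_Icc.exists_isMinOn hne (hf.mono hIsub')
    obtain ⟨x₁, hx₁, hmax⟩ := isCompact_Icc.exists_isMaxOn hne (hg.mono hIsub')
    have hm : 0 < f x₀ := hfpos x₀ (hIsub hx₀)
    set K2 : ℝ := g x₁ / f x₀ with hK2
    clear_value K2
    have hK2nn : 0 ≤ K2 := by rw [hK2]; exact div_nonneg (hgnn x₁ (hIsub' hx₁)) hm.le
    have hK0nn : 0 ≤ K0 := by rw [hK0]; positivity
    refine ⟨max K0 (max K1 K2), le_trans hK0nn (le_max_left _ _), fun x hx => ?_⟩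
    have hfx : 0 < f x := hfpos x hx
    by_cases hxa : x < a
    · have hd : dist x 0 < δ0 := by
        rw [Real.dist_eq, sub_zero, abs_of_pos hx.1]
        have hda : a ≤ δ0 / 2 := by
          rw [ha_def]
          have : min δ0 1 ≤ δ0 := min_le_left _ _
          linarith
        linarith
      calc g x ≤ K0 * f x := H0 x hx hd
        _ ≤ max K0 (max K1 K2) * f x :=
            mul_le_mul_of_nonneg_right (le_max_left _ _) hfx.le
    · by_cases hxb : b < x
      · have hd : dist x 1 < δ1 := by
          rw [Real.dist_eq, abs_of_neg (by linarith [hx.2] : x - 1 < 0)]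
          have hdb : 1 - b ≤ δ1 / 2 := by
            rw [hb_def]
            have : min δ1 1 ≤ δ1 := min_le_left _ _
            linarith
          linarith
        calc g x ≤ K1 * f x := H1 x hx hd
          _ ≤ max K0 (max K1 K2) * f x :=
              mul_le_mul_of_nonneg_right
                (le_trans (le_max_left _ _) (le_max_right _ _)) hfx.le
      · have hxI : x ∈ Set.Icc a b := ⟨not_lt.mp hxa, not_lt.mp hxb⟩
        have h1 : g x ≤ g x₁ := hmax hxI
        have h2 : f x₀ ≤ f x := hmin hxI
        have hK2f : g x ≤ K2 * f x := by
          rw [hK2, div_mul_eq_mul_div, le_div_iff₀ hm]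
          have hg1nn : 0 ≤ g x₁ := hgnn x₁ (hIsub' hx₁)
          nlinarith
        calc g x ≤ K2 * f x := hK2f
          _ ≤ max K0 (max K1 K2) * f x :=
              mul_le_mul_of_nonneg_right
                (le_trans (le_max_right _ _) (le_max_right _ _)) hfx.le
  refine ⟨1 / (2 * (C + 1)), by positivity, ?_⟩
  rintro τ ⟨hτ0, hτ⟩ x hx
  have hfx : 0 < f x := hfpos x hx
  have hgx : g x ≤ C * f x := hC x hx
  have hτC : 2 * τ * C < 1 := by
    have h := (lt_div_iff₀ (by positivity : (0:ℝ) < 2 * (C + 1))).mp hτ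
    nlinarith
  nlinarith [mul_le_mul_of_nonneg_left hgx (by positivity : (0:ℝ) ≤ 2 * τ),
    mul_lt_mul_of_pos_right hτC hfx]
end
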